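/- Let F : (Fin d → Fin n) → ℂ be an order-d complex tensor that is partial symmetric with respect to its first m indices, where m < d, and let π_{j,m+1} denote the transposition of positions j and m+1. Then for all integers ℓ, k with 1 ≤ ℓ ≤ k ≤ m, the following identity of tensors holds: ( Σ_{j=1}^{k} (F − F_{π_{j,m+1}}) )_{π_{ℓ,m+1}} = −k·(F − F_{π_{ℓ,m+1}}) + Σ_{j=1, j≠ℓ}^{k} (F − F_{π_{j,m+1}}). -/

import Mathlib

/-- Identity \eqref{formula:tensor-skewness}: if `F` is partial symmetric with respect to its
first `m` indices (`m < d`) and `1 ≤ ℓ ≤ k ≤ m` (here `l : Fin k` is the 0-based version of `ℓ`),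
then `(∑_{j=1}^k (F - F_{π_{j,m+1}}))_{π_{ℓ,m+1}} = -k (F - F_{π_{ℓ,m+1}}) + ∑_{j≠ℓ} (F - F_{π_{j,m+1}})`. -/
theorem stmt_1 {d n m k : ℕ} (hm : m < d) (hk : k ≤ m)
    (F : (Fin d → Fin n) → ℂ)
    (hF : ∀ σ : Equiv.Perm (Fin d), (∀ p : Fin d, m ≤ (p : ℕ) → σ p = p) →
      ∀ i : Fin d → Fin n, F (i ∘ ⇑σ) = F i)
    (l : Fin k) :
    ∀ i : Fin d → Fin n,
      ∑ j : Fin k,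
          (F (i ∘ ⇑(Equiv.swap (Fin.castLE (hk.trans hm.le) l) ⟨m, hm⟩))
            - F ((i ∘ ⇑(Equiv.swap (Fin.castLE (hk.trans hm.le) l) ⟨m, hm⟩)) ∘
                  ⇑(Equiv.swap (Fin.castLE (hk.trans hm.le) j) ⟨m, hm⟩)))
        = -(k : ℂ) * (F i - F (i ∘ ⇑(Equiv.swap (Fin.castLE (hk.trans hm.le) l) ⟨m, hm⟩)))
          + ∑ j ∈ Finset.univ.erase l,
              (F i - F (i ∘ ⇑(Equiv.swap (Fin.castLE (hk.trans hm.le) j) ⟨m, hm⟩))) := by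
  intro i
  set a : Fin d := Fin.castLE (hk.trans hm.le) l with ha
  set b : Fin d := ⟨m, hm⟩ with hb
  set c : Fin k → Fin d := fun j => Fin.castLE (hk.trans hm.le) j with hc
  have hkpos : 0 < k := l.pos
  have hab : a ≠ b := by
    simp [ha, hb, Fin.ext_iff]
    omega
  have hcb : ∀ j : Fin k, c j ≠ b := by
    intro j
    simp [hc, hb, Fin.ext_iff]
    omega
  -- term j = l
  have hterm_l : F ((i ∘ ⇑(Equiv.swap a b)) ∘ ⇑(Equiv.swap (c l) b)) = F i := by
    have : c l = a := rfl
    rw [this]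
    congr 1
    funext p
    simp [Equiv.swap_apply_self]
  -- terms j ≠ l
  have hterm : ∀ j : Fin k, j ≠ l →
      F ((i ∘ ⇑(Equiv.swap a b)) ∘ ⇑(Equiv.swap (c j) b)) = F (i ∘ ⇑(Equiv.swap (c j) b)) := by
    intro j hj
    have hca : c j ≠ a := by
      simp only [hc, ha, Ne, Fin.ext_iff, Fin.coe_castLE]
      exact fun h => hj (Fin.ext h)
    have hcomp : (i ∘ ⇑(Equiv.swap a b)) ∘ ⇑(Equiv.swap (c j) b)
        = (i ∘ ⇑(Equiv.swap (c j) b)) ∘ ⇑(Equiv.swap a (c j)) := by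
      funext p
      simp only [Function.comp_apply, Equiv.swap_apply_def]
      by_cases h1 : p = a <;> by_cases h2 : p = c j <;> by_cases h3 : p = b <;>
        simp_all [hab, hca, hcb j, (hcb j).symm, hab.symm, hca.symm, Ne.symm hj]
    rw [hcomp]
    exact hF (Equiv.swap a (c j))
      (fun p hp => Equiv.swap_apply_of_ne_of_ne
        (by rintro rfl; simp [ha] at hp; omega)
        (by rintro rfl; simp [hc] at hp; omega)) _
  rw [← Finset.add_sum_erase _ _ (Finset.mem_univ l), hterm_l,
    Finset.sum_congr rfl (fun j hj => by rw [hterm j (Finset.ne_of_mem_erase hj)]),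
    Finset.sum_sub_distrib, Finset.sum_sub_distrib, Finset.sum_const, Finset.sum_const,
    Finset.card_erase_of_mem (Finset.mem_univ l), Finset.card_univ, Fintype.card_fin]
  have hcast : ((k - 1 : ℕ) : ℂ) = (k : ℂ) - 1 := by
    push_cast [Nat.cast_sub hkpos]
    ring
  simp only [nsmul_eq_mul, hcast]
  ring
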